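/- arXiv:1502.01288 — 2 statements merged into one kernel-verified Lean document; each statement's English description precedes it below -/
import Mathlib

section
/- Let ℓ be an odd prime, let δ ∈ F_ℓ be a quadratic nonresidue, and let a, b ∈ F_ℓ with a ≠ 0 and with a² − δb² a quadratic nonresidue. Set h = [[0, δ],[1, 0]] and g = [[a, −δb],[b, −a]] (both invertible). Then the subgroup ⟨g, h⟩ of GL₂(F_ℓ) is contained in a conjugate of N_sp if and only if ℓ ≡ 1 (mod 4). -/
open Matrix

abbrev GL2 (ℓ : ℕ) : Type := GL (Fin 2) (ZMod ℓ)

/-- The underlying matrix of an element of `GL₂(F_ℓ)`. -/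
def mat {ℓ : ℕ} (g : GL2 ℓ) : Matrix (Fin 2) (Fin 2) (ZMod ℓ) := g

/-- `g` is a diagonal matrix. -/
def IsDiag {ℓ : ℕ} (g : GL2 ℓ) : Prop := mat g 0 1 = 0 ∧ mat g 1 0 = 0

/-- `g` is an antidiagonal matrix. -/
def IsAnti {ℓ : ℕ} (g : GL2 ℓ) : Prop := mat g 0 0 = 0 ∧ mat g 1 1 = 0

/-- `g` is a scalar matrix. -/
def IsScalar {ℓ : ℕ} (g : GL2 ℓ) : Prop :=
  ∃ c : ZMod ℓ, mat g = c • (1 : Matrix (Fin 2) (Fin 2) (ZMod ℓ))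

/-- Membership in the split Cartan subgroup `C_sp` (the diagonal matrices). -/
def InCsp {ℓ : ℕ} (g : GL2 ℓ) : Prop := IsDiag g

/-- Membership in the normalizer `N_sp` of the split Cartan (diagonal or antidiagonal). -/
def InNsp {ℓ : ℕ} (g : GL2 ℓ) : Prop := IsDiag g ∨ IsAnti g

/-- Membership in the nonsplit Cartan `C_ns` w.r.t. the nonresidue `δ`:
matrices of the form `[[a, δb], [b, a]]`. -/
def InCns {ℓ : ℕ} (δ : ZMod ℓ) (g : GL2 ℓ) : Prop :=
  mat g 1 1 = mat g 0 0 ∧ mat g 0 1 = δ * mat g 1 0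

/-- Membership in `N_ns \ C_ns` (as a matrix shape): `[[a, -δb], [b, -a]]`. -/
def InNnsAnti {ℓ : ℕ} (δ : ZMod ℓ) (g : GL2 ℓ) : Prop :=
  mat g 1 1 = - mat g 0 0 ∧ mat g 0 1 = - (δ * mat g 1 0)

/-- Membership in the normalizer `N_ns` of the nonsplit Cartan. -/
def InNns {ℓ : ℕ} (δ : ZMod ℓ) (g : GL2 ℓ) : Prop := InCns δ g ∨ InNnsAnti δ g

/-- `PGL₂(F_ℓ)`: the quotient of `GL₂(F_ℓ)` by its center (the scalar matrices). -/
abbrev PGL2 (ℓ : ℕ) : Type := GL2 ℓ ⧸ Subgroup.center (GL2 ℓ)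

/-- The natural projection `GL₂(F_ℓ) →* PGL₂(F_ℓ)`. -/
def toPGL (ℓ : ℕ) : GL2 ℓ →* PGL2 ℓ := QuotientGroup.mk' _

/-- The image of a subgroup of `GL₂(F_ℓ)` in `PGL₂(F_ℓ)`. -/
def projImage {ℓ : ℕ} (G : Subgroup (GL2 ℓ)) : Subgroup (PGL2 ℓ) := G.map (toPGL ℓ)

/-- `H` is isomorphic to the alternating group `A₄`. -/
def IsA4 {ℓ : ℕ} (H : Subgroup (PGL2 ℓ)) : Prop := Nonempty (H ≃* alternatingGroup (Fin 4))

/-- `H` is isomorphic to the symmetric group `S₄`. -/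
def IsS4 {ℓ : ℕ} (H : Subgroup (PGL2 ℓ)) : Prop := Nonempty (H ≃* Equiv.Perm (Fin 4))

/-- `H` is isomorphic to the alternating group `A₅`. -/
def IsA5 {ℓ : ℕ} (H : Subgroup (PGL2 ℓ)) : Prop := Nonempty (H ≃* alternatingGroup (Fin 5))

lemma mat_mul' {ℓ : ℕ} (x y : GL2 ℓ) : mat (x*y) = mat x * mat y := rfl
lemma mat_inv' {ℓ : ℕ} (x : GL2 ℓ) : mat x⁻¹ = (mat x)⁻¹ := Matrix.coe_units_inv x
lemma mat_one' {ℓ : ℕ} : mat (1 : GL2 ℓ) = 1 := rfl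

lemma InNsp_one' {ℓ : ℕ} : InNsp (1 : GL2 ℓ) := by
  exact Or.inl ⟨by rw [mat_one']; simp [Matrix.one_apply], by rw [mat_one']; simp [Matrix.one_apply]⟩

lemma InNsp_mul' {ℓ : ℕ} {x y : GL2 ℓ} (hx : InNsp x) (hy : InNsp y) : InNsp (x * y) := by
  have e : ∀ i j, mat (x*y) i j = mat x i 0 * mat y 0 j + mat x i 1 * mat y 1 j := by
    intro i j
    rw [mat_mul', Matrix.mul_apply, Fin.sum_univ_two]
  rcases hx with ⟨h1, h2⟩ | ⟨h1, h2⟩ <;> rcases hy with ⟨k1, k2⟩ | ⟨k1, k2⟩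
  · exact Or.inl ⟨by rw [e, h1, k1]; ring, by rw [e, h2, k2]; ring⟩
  · exact Or.inr ⟨by rw [e, h1, k1]; ring, by rw [e, h2, k2]; ring⟩
  · exact Or.inr ⟨by rw [e, h1, k2]; ring, by rw [e, h2, k1]; ring⟩
  · exact Or.inl ⟨by rw [e, h1, k2]; ring, by rw [e, h2, k1]; ring⟩

lemma InNsp_inv' {ℓ : ℕ} {x : GL2 ℓ} (hx : InNsp x) : InNsp x⁻¹ := by
  have e : mat x⁻¹ = Ring.inverse (mat x).det •
      !![mat x 1 1, -(mat x 0 1); -(mat x 1 0), mat x 0 0] := by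
    rw [mat_inv', Matrix.inv_def, Matrix.adjugate_fin_two]
  rcases hx with ⟨h1, h2⟩ | ⟨h1, h2⟩
  · exact Or.inl ⟨by rw [e]; simp [Matrix.smul_apply, h1],
      by rw [e]; simp [Matrix.smul_apply, h2]⟩
  · exact Or.inr ⟨by rw [e]; simp [Matrix.smul_apply, h2],
      by rw [e]; simp [Matrix.smul_apply, h1]⟩

def NspConj {ℓ : ℕ} (x : GL2 ℓ) : Subgroup (GL2 ℓ) where
  carrier := {y | InNsp (x * y * x⁻¹)}
  one_mem' := by
    show InNsp (x * 1 * x⁻¹)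
    rw [mul_one, mul_inv_cancel]
    exact InNsp_one'
  mul_mem' := by
    intro p q hp hq
    show InNsp (x * (p * q) * x⁻¹)
    have e : x * (p * q) * x⁻¹ = (x * p * x⁻¹) * (x * q * x⁻¹) := by group
    rw [e]; exact InNsp_mul' hp hq
  inv_mem' := by
    intro p hp
    show InNsp (x * p⁻¹ * x⁻¹)
    have e : x * p⁻¹ * x⁻¹ = (x * p * x⁻¹)⁻¹ := by group
    rw [e]; exact InNsp_inv' hp

lemma conj_closure_nsp {ℓ : ℕ} (x : GL2 ℓ) {S : Set (GL2 ℓ)}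
    (hS : ∀ s ∈ S, InNsp (x * s * x⁻¹)) :
    ∀ y ∈ Subgroup.closure S, InNsp (x * y * x⁻¹) :=
  fun _ hy => (Subgroup.closure_le (NspConj x)).mpr hS hy

/-- For `h = [[0, δ],[1, 0]]` and `g = [[a, -δb],[b, -a]]` with `a ≠ 0`
and `a² - δb²` a nonresidue, the subgroup `⟨g, h⟩` is contained in a conjugate of
`N_sp` if and only if `ℓ ≡ 1 (mod 4)`. -/
theorem two_generator_in_conj_Nsp_iff
    {ℓ : ℕ} [Fact ℓ.Prime] (hℓ : ℓ ≠ 2)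
    (δ : ZMod ℓ) (hδ : ¬ IsSquare δ) (a b : ZMod ℓ) (ha : a ≠ 0)
    (hnr : ¬ IsSquare (a ^ 2 - δ * b ^ 2))
    (g h : GL2 ℓ) (hgm : mat g = !![a, -(δ * b); b, -a]) (hhm : mat h = !![0, δ; 1, 0]) :
    (∃ x : GL2 ℓ, ∀ y ∈ Subgroup.closure {g, h}, InNsp (x * y * x⁻¹)) ↔ ℓ % 4 = 1 := by
  have hp : ℓ.Prime := Fact.out
  have hδ0 : δ ≠ 0 := fun e => hδ (e ▸ ⟨0, by ring⟩)
  have hd0 : a ^ 2 - δ * b ^ 2 ≠ 0 := fun e => hnr (e ▸ ⟨0, by ring⟩)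
  have hprod0 : δ * (a ^ 2 - δ * b ^ 2) ≠ 0 := mul_ne_zero hδ0 hd0
  have hsq : IsSquare (δ * (a ^ 2 - δ * b ^ 2)) := by
    have h1 : quadraticChar (ZMod ℓ) δ = -1 := quadraticChar_neg_one_iff_not_isSquare.mpr hδ
    have h2 : quadraticChar (ZMod ℓ) (a ^ 2 - δ * b ^ 2) = -1 :=
      quadraticChar_neg_one_iff_not_isSquare.mpr hnr
    have h3 : quadraticChar (ZMod ℓ) (δ * (a ^ 2 - δ * b ^ 2)) = 1 := by
      rw [_root_.map_mul, h1, h2]; ring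
    exact (quadraticChar_one_iff_isSquare hprod0).mp h3
  obtain ⟨s, hs⟩ := hsq
  have hodd : ℓ % 2 = 1 := Nat.odd_iff.mp (hp.odd_of_ne_two hℓ)
  have detg : (mat g).det = δ * b ^ 2 - a ^ 2 := by rw [hgm, Matrix.det_fin_two_of]; ring
  have deth : (mat h).det = -δ := by rw [hhm, Matrix.det_fin_two_of]; ring
  constructor
  · rintro ⟨x, hx⟩
    have hgmem : g ∈ Subgroup.closure ({g, h} : Set (GL2 ℓ)) :=
      Subgroup.subset_closure (by simp)
    have hhmem : h ∈ Subgroup.closure ({g, h} : Set (GL2 ℓ)) :=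
      Subgroup.subset_closure (by simp)
    have hxg := hx g hgmem
    have hxh := hx h hhmem
    have hxgh := hx (g * h) (mul_mem hgmem hhmem)
    -- shape analysis under conjugation for trace-zero elements
    have shape : ∀ y : GL2 ℓ, InNsp (x * y * x⁻¹) → (mat y).trace = 0 →
        (∃ c : ZMod ℓ, c * c = -(mat y).det) ∨ IsAnti (x * y * x⁻¹) := by
      intro y hy hty
      rcases hy with ⟨h1, h2⟩ | hanti
      · left
        have htr : mat (x * y * x⁻¹) 0 0 + mat (x * y * x⁻¹) 1 1 = 0 := by
          have t := Matrix.trace_units_conj x (mat y)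
          rw [hty] at t
          rw [← Matrix.trace_fin_two]
          exact t
        have hdet : mat (x * y * x⁻¹) 0 0 * mat (x * y * x⁻¹) 1 1 -
            mat (x * y * x⁻¹) 0 1 * mat (x * y * x⁻¹) 1 0 = (mat y).det := by
          rw [← Matrix.det_fin_two]
          exact Matrix.det_units_conj x (mat y)
        refine ⟨mat (x * y * x⁻¹) 0 0, ?_⟩
        rw [h1, h2] at hdet
        linear_combination (mat (x * y * x⁻¹) 0 0) * htr - hdet
      · exact Or.inr hanti
    have trg0 : (mat g).trace = 0 := by rw [hgm, Matrix.trace_fin_two_of]; ring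
    have trh0 : (mat h).trace = 0 := by rw [hhm, Matrix.trace_fin_two_of]; ring
    have hag : IsAnti (x * g * x⁻¹) := by
      rcases shape g hxg trg0 with ⟨c, hc⟩ | hA
      · exact absurd ⟨c, by rw [detg] at hc; linear_combination -hc⟩ hnr
      · exact hA
    have hah : IsAnti (x * h * x⁻¹) := by
      rcases shape h hxh trh0 with ⟨c, hc⟩ | hA
      · exact absurd ⟨c, by rw [deth] at hc; linear_combination -hc⟩ hδ
      · exact hA
    -- the product is conjugated to a diagonal trace-zero matrix
    have heq : x * (g * h) * x⁻¹ = (x * g * x⁻¹) * (x * h * x⁻¹) := by group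
    set K := x * (g * h) * x⁻¹ with hK
    have hKmul : mat K = mat (x * g * x⁻¹) * mat (x * h * x⁻¹) := by rw [heq]; rfl
    have hKe : ∀ i j, mat K i j =
        mat (x * g * x⁻¹) i 0 * mat (x * h * x⁻¹) 0 j +
        mat (x * g * x⁻¹) i 1 * mat (x * h * x⁻¹) 1 j := by
      intro i j; rw [hKmul, Matrix.mul_apply, Fin.sum_univ_two]
    have hK01 : mat K 0 1 = 0 := by rw [hKe, hag.1, hah.2]; ring
    have hK10 : mat K 1 0 = 0 := by rw [hKe, hag.2, hah.1]; ring
    have detK : mat K 0 0 * mat K 1 1 - mat K 0 1 * mat K 1 0 = δ * (a ^ 2 - δ * b ^ 2) := by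
      rw [← Matrix.det_fin_two]
      have dmul : (mat (g * h)).det = δ * (a ^ 2 - δ * b ^ 2) := by
        rw [mat_mul', Matrix.det_mul, detg, deth]; ring
      have t := Matrix.det_units_conj x (mat (g * h))
      rw [dmul] at t
      exact t
    have trK : mat K 0 0 + mat K 1 1 = 0 := by
      have t := Matrix.trace_units_conj x (mat (g * h))
      have tgh : (mat (g * h)).trace = 0 := by
        rw [mat_mul', hgm, hhm, Matrix.trace_fin_two, Matrix.mul_apply, Matrix.mul_apply,
          Fin.sum_univ_two, Fin.sum_univ_two]
        simp
        ring
      rw [tgh] at t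
      rw [← Matrix.trace_fin_two]
      exact t
    have hK00sq : mat K 0 0 * mat K 0 0 = -(δ * (a ^ 2 - δ * b ^ 2)) := by
      rw [hK01, hK10] at detK
      linear_combination (mat K 0 0) * trK - detK
    have hK000 : mat K 0 0 ≠ 0 := by
      intro e
      apply hprod0
      have := hK00sq
      rw [e, mul_zero] at this
      linear_combination this
    have hneg1 : IsSquare (-1 : ZMod ℓ) := by
      refine ⟨s * (mat K 0 0)⁻¹, ?_⟩
      have hinv : mat K 0 0 * (mat K 0 0)⁻¹ = 1 := mul_inv_cancel₀ hK000
      field_simp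
      linear_combination hs - hK00sq
    have h3 : ℓ % 4 ≠ 3 := ZMod.exists_sq_eq_neg_one_iff.mp hneg1
    omega
  · intro hmod
    have hneg : IsSquare (-1 : ZMod ℓ) := ZMod.exists_sq_eq_neg_one_iff.mpr (by omega)
    obtain ⟨i, hi⟩ := hneg
    have hs0 : s ≠ 0 := fun e => hprod0 (by rw [hs, e, mul_zero])
    have hi0 : i ≠ 0 := fun e => by
      rw [e, mul_zero] at hi
      exact one_ne_zero (neg_eq_zero.mp hi)
    set l : ZMod ℓ := i * s with hldef
    have hl : l * l = -(δ * (a ^ 2 - δ * b ^ 2)) := by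
      rw [hldef]; linear_combination (-(s * s)) * hi + hs
    have hl0 : l ≠ 0 := mul_ne_zero hi0 hs0
    have h2 : (2 : ZMod ℓ) ≠ 0 := by
      have : ((2 : ℕ) : ZMod ℓ) ≠ 0 := by
        rw [Ne, ZMod.natCast_eq_zero_iff]
        exact fun hd => hℓ ((Nat.prime_dvd_prime_iff_eq hp Nat.prime_two).mp hd)
      simpa using this
    set P : Matrix (Fin 2) (Fin 2) (ZMod ℓ) := !![a * δ, a * δ; δ * b + l, δ * b - l] with hPdef
    have hdetP : P.det = -(2 * a * δ * l) := by rw [hPdef, Matrix.det_fin_two_of]; ring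
    have hdP0 : P.det ≠ 0 := by
      rw [hdetP]
      exact neg_ne_zero.mpr (mul_ne_zero (mul_ne_zero (mul_ne_zero h2 ha) hδ0) hl0)
    obtain ⟨u, hu⟩ := (Matrix.isUnit_iff_isUnit_det P).mpr hdP0.isUnit
    refine ⟨u⁻¹, ?_⟩
    apply conj_closure_nsp
    have conjmat : ∀ y : GL2 ℓ, mat (u⁻¹ * y * (u⁻¹ : GL2 ℓ)⁻¹) = P⁻¹ * mat y * P := by
      intro y
      rw [inv_inv]
      have e : mat (u⁻¹ * y * u) = mat ((u⁻¹ : GL2 ℓ)) * mat y * mat (u : GL2 ℓ) := rfl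
      have hu' : mat (u : GL2 ℓ) = P := hu
      rw [e, mat_inv', hu']
    have entry : ∀ (M : Matrix (Fin 2) (Fin 2) (ZMod ℓ)) (i j : Fin 2),
        (P⁻¹ * M * P) i j = Ring.inverse P.det * ((P.adjugate * M * P) i j) := by
      intro M i j
      rw [Matrix.inv_def, Matrix.smul_mul, Matrix.smul_mul, Matrix.smul_apply, smul_eq_mul]
    rintro y (rfl | hy)
    · refine Or.inr ⟨?_, ?_⟩
      · rw [conjmat, hgm, entry]
        apply mul_eq_zero_of_right
        rw [hPdef, Matrix.adjugate_fin_two]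
        simp [Matrix.mul_apply, Fin.sum_univ_two]
        linear_combination l * hl + (i*s^3 - δ*b*s^2) * hi + (δ*b - i*s) * hs
      · rw [conjmat, hgm, entry]
        apply mul_eq_zero_of_right
        rw [hPdef, Matrix.adjugate_fin_two]
        simp [Matrix.mul_apply, Fin.sum_univ_two]
        linear_combination l * hl + (δ*b*s^2 + i*s^3) * hi + (-(δ*b) - i*s) * hs
    · rw [Set.mem_singleton_iff] at hy
      subst hy
      refine Or.inr ⟨?_, ?_⟩
      · rw [conjmat, hhm, entry]
        apply mul_eq_zero_of_right
        rw [hPdef, Matrix.adjugate_fin_two]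
        simp [Matrix.mul_apply, Fin.sum_univ_two]
        linear_combination δ * hl + 2*δ*s^2 * hi - 2*δ * hs
      · rw [conjmat, hhm, entry]
        apply mul_eq_zero_of_right
        rw [hPdef, Matrix.adjugate_fin_two]
        simp [Matrix.mul_apply, Fin.sum_univ_two]
        linear_combination δ * hl
end

section
/- Let ℓ be an odd prime and let G be a subgroup of N_sp (so every element of G is diagonal or antidiagonal) such that every element of G is either a scalar matrix or has irreducible characteristic polynomial over F_ℓ. Then G is contained in a conjugate of the nonsplit Cartan subgroup C_ns. -/
open Matrix

open Polynomial in
/-- Characteristic polynomial of a `2 × 2` matrix, explicitly. -/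
lemma cp2_aux {ℓ : ℕ} [Fact ℓ.Prime] (M : Matrix (Fin 2) (Fin 2) (ZMod ℓ)) :
    M.charpoly = X^2 - C (M 0 0 + M 1 1) * X + C (M 0 0 * M 1 1 - M 0 1 * M 1 0) := by
  rw [Matrix.charpoly, Matrix.det_fin_two]
  simp [charmatrix_apply]
  ring

lemma cp_eval_aux {ℓ : ℕ} [Fact ℓ.Prime] (M : Matrix (Fin 2) (Fin 2) (ZMod ℓ)) (x : ZMod ℓ) :
    M.charpoly.eval x = x^2 - (M 0 0 + M 1 1) * x + (M 0 0 * M 1 1 - M 0 1 * M 1 0) := by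
  rw [cp2_aux]; simp

lemma no_root_of_irred_aux {ℓ : ℕ} [Fact ℓ.Prime] (M : Matrix (Fin 2) (Fin 2) (ZMod ℓ))
    (h : Irreducible M.charpoly) (x : ZMod ℓ) : M.charpoly.eval x ≠ 0 := by
  intro hx
  have h1 := Polynomial.degree_eq_one_of_irreducible_of_root h hx
  have h2 : M.charpoly.degree = 2 := by
    simpa using Matrix.charpoly_degree_eq_dim M
  rw [h1] at h2
  exact absurd h2 (by norm_num)

lemma nonsq_mul_aux {ℓ : ℕ} [Fact ℓ.Prime] {a b : ZMod ℓ}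
    (ha : ¬ IsSquare a) (hb : ¬ IsSquare b) : IsSquare (a * b) := by
  have ha0 : a ≠ 0 := fun h => ha (h ▸ ⟨0, by ring⟩)
  have hb0 : b ≠ 0 := fun h => hb (h ▸ ⟨0, by ring⟩)
  have hqa : quadraticChar (ZMod ℓ) a = -1 :=
    (quadraticChar_neg_one_iff_not_isSquare).mpr ha
  have hqb : quadraticChar (ZMod ℓ) b = -1 :=
    (quadraticChar_neg_one_iff_not_isSquare).mpr hb
  have : quadraticChar (ZMod ℓ) (a * b) = 1 := by
    rw [_root_.map_mul, hqa, hqb]; ring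
  exact (quadraticChar_one_iff_isSquare (mul_ne_zero ha0 hb0)).mp this

lemma conj_aux {ℓ : ℕ} [Fact ℓ.Prime] (s : ZMod ℓ) (M : Matrix (Fin 2) (Fin 2) (ZMod ℓ)) :
    !![s⁻¹, 0; 0, 1] * M * !![s, 0; 0, 1] =
      !![s⁻¹ * M 0 0 * s, s⁻¹ * M 0 1; M 1 0 * s, M 1 1] := by
  conv_lhs => rw [Matrix.eta_fin_two M]
  rw [Matrix.mul_fin_two, Matrix.mul_fin_two]
  congr 1 <;> ring_nf

/-- If `G ≤ N_sp` and every element of `G` is scalar or has irreducible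
characteristic polynomial, then `G` is contained in a conjugate of `C_ns`. -/
theorem subgroup_of_Nsp_locally_Cns_is_in_conj_Cns
    {ℓ : ℕ} [Fact ℓ.Prime] (hℓ : ℓ ≠ 2) (δ : ZMod ℓ) (hδ : ¬ IsSquare δ)
    (G : Subgroup (GL2 ℓ)) (hG : ∀ g ∈ G, InNsp g)
    (hloc : ∀ g ∈ G, IsScalar g ∨ Irreducible (Matrix.charpoly (mat g))) :
    ∃ x : GL2 ℓ, ∀ g ∈ G, InCns δ (x * g * x⁻¹) := by
  have hdet : ∀ g : GL2 ℓ, (mat g).det ≠ 0 := by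
    intro g
    have : IsUnit (mat g).det := (Matrix.isUnit_iff_isUnit_det _).mp g.isUnit
    exact this.ne_zero
  -- diagonal elements of G are scalar
  have hdiag : ∀ g ∈ G, IsDiag g → IsScalar g := by
    intro g hg hd
    rcases hloc g hg with hs | hirr
    · exact hs
    · exfalso
      apply no_root_of_irred_aux (mat g) hirr (mat g 0 0)
      rw [cp_eval_aux, hd.1, hd.2]; ring
  -- antidiagonal elements have nonsquare product of off-diagonal entries
  have hanti : ∀ g ∈ G, IsAnti g → ¬ IsSquare (mat g 0 1 * mat g 1 0) := by
    rintro g hg ha ⟨t, ht⟩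
    have hns : ¬ IsScalar g := by
      rintro ⟨c, hc⟩
      have e01 : mat g 0 1 = 0 := by rw [hc]; simp [Matrix.one_apply]
      apply hdet g
      rw [Matrix.det_fin_two, ha.1, ha.2, e01]; ring
    rcases hloc g hg with hs | hirr
    · exact hns hs
    · apply no_root_of_irred_aux (mat g) hirr t
      rw [cp_eval_aux, ha.1, ha.2, ht]; ring
  by_cases hex : ∃ g0 ∈ G, IsAnti g0
  · obtain ⟨g0, hg0, ha0⟩ := hex
    set b0 := mat g0 0 1 with hb0def
    set c0 := mat g0 1 0 with hc0def
    have hbc0 : b0 * c0 ≠ 0 := by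
      intro h
      apply hdet g0
      rw [Matrix.det_fin_two, ha0.1, ha0.2, ← hb0def, ← hc0def, h]; ring
    have hb0 : b0 ≠ 0 := left_ne_zero_of_mul hbc0
    have hc0 : c0 ≠ 0 := right_ne_zero_of_mul hbc0
    have hr : ¬ IsSquare (b0 * c0⁻¹) := by
      rintro ⟨t, ht⟩
      apply hanti g0 hg0 ha0
      refine ⟨t * c0, ?_⟩
      rw [← hb0def, ← hc0def]
      field_simp at ht ⊢
      linear_combination ht
    have hδ0 : δ ≠ 0 := fun h => hδ (h ▸ ⟨0, by ring⟩)
    have hδ' : ¬ IsSquare δ⁻¹ := by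
      rintro ⟨t, ht⟩
      exact hδ ⟨t⁻¹, by rw [← inv_inv δ, ht, mul_inv]⟩
    obtain ⟨s, hs⟩ := nonsq_mul_aux hr hδ'
    have hs0 : s ≠ 0 := by
      intro h
      rw [h, mul_zero] at hs
      apply hb0
      field_simp at hs
      simpa using hs
    have hkey : b0 = δ * (s * s) * c0 := by
      field_simp at hs
      linear_combination hs
    set A : Matrix (Fin 2) (Fin 2) (ZMod ℓ) := !![s⁻¹, 0; 0, 1] with hA
    set B : Matrix (Fin 2) (Fin 2) (ZMod ℓ) := !![s, 0; 0, 1] with hB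
    have hAB : A * B = 1 := by
      rw [hA, hB, Matrix.mul_fin_two]
      rw [show (1 : Matrix (Fin 2) (Fin 2) (ZMod ℓ)) = !![1,0;0,1] by
        rw [Matrix.eta_fin_two 1]; simp [Matrix.one_apply]]
      congr 1 <;> simp [inv_mul_cancel₀ hs0]
    have hBA : B * A = 1 := by
      rw [hA, hB, Matrix.mul_fin_two]
      rw [show (1 : Matrix (Fin 2) (Fin 2) (ZMod ℓ)) = !![1,0;0,1] by
        rw [Matrix.eta_fin_two 1]; simp [Matrix.one_apply]]
      congr 1 <;> simp [mul_inv_cancel₀ hs0]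
    refine ⟨⟨A, B, hAB, hBA⟩, ?_⟩
    intro g hg
    have hmat : mat (⟨A, B, hAB, hBA⟩ * g * (⟨A, B, hAB, hBA⟩ : GL2 ℓ)⁻¹)
        = A * mat g * B := rfl
    have hconj : A * mat g * B =
        !![s⁻¹ * mat g 0 0 * s, s⁻¹ * mat g 0 1; mat g 1 0 * s, mat g 1 1] := by
      rw [hA, hB]; exact conj_aux s (mat g)
    rcases hG g hg with hd | ha
    · -- diagonal, hence scalar
      obtain ⟨c, hc⟩ := hdiag g hg hd
      have hc00 : mat g 0 0 = c := by rw [hc]; simp [Matrix.one_apply]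
      have hc11 : mat g 1 1 = c := by rw [hc]; simp [Matrix.one_apply]
      have hc01 : mat g 0 1 = 0 := by rw [hc]; simp [Matrix.one_apply]
      have hc10 : mat g 1 0 = 0 := by rw [hc]; simp [Matrix.one_apply]
      constructor
      · rw [hmat, hconj]
        simp [hc00, hc11]
        field_simp
      · rw [hmat, hconj]
        simp [hc01, hc10]
    · -- antidiagonal
      have hgg0 : (g * g0 : GL2 ℓ) ∈ G := mul_mem hg hg0
      have hm : mat (g * g0) = mat g * mat g0 := rfl
      have hd01 : mat (g * g0) 0 1 = 0 := by
        rw [hm, Matrix.mul_apply, Fin.sum_univ_two, ha.1, ha0.2]; ring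
      have hd10 : mat (g * g0) 1 0 = 0 := by
        rw [hm, Matrix.mul_apply, Fin.sum_univ_two, ha.2, ha0.1]; ring
      obtain ⟨c, hc⟩ := hdiag _ hgg0 ⟨hd01, hd10⟩
      have hp00 : mat (g * g0) 0 0 = mat g 0 1 * c0 := by
        rw [hm, Matrix.mul_apply, Fin.sum_univ_two, ha.1, ← hc0def]; ring
      have hp11 : mat (g * g0) 1 1 = mat g 1 0 * b0 := by
        rw [hm, Matrix.mul_apply, Fin.sum_univ_two, ha.2, ← hb0def]; ring
      have hc00 : mat (g * g0) 0 0 = c := by rw [hc]; simp [Matrix.one_apply]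
      have hc11 : mat (g * g0) 1 1 = c := by rw [hc]; simp [Matrix.one_apply]
      have hratio : mat g 0 1 * c0 = mat g 1 0 * b0 := by
        rw [← hp00, ← hp11, hc00, hc11]
      have hoff : mat g 0 1 = δ * (s * s) * mat g 1 0 := by
        rw [hkey] at hratio
        exact mul_right_cancel₀ hc0 (by linear_combination hratio)
      constructor
      · rw [hmat, hconj]
        simp [ha.1, ha.2]
      · rw [hmat, hconj]
        simp only [Matrix.cons_val', Matrix.cons_val_zero, Matrix.cons_val_one,
          Matrix.head_cons, Matrix.empty_val', Matrix.cons_val_fin_one, Matrix.head_fin_const,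
          Matrix.of_apply]
        rw [hoff]
        field_simp
  · -- no antidiagonal elements: all elements are scalar; take x = 1
    push_neg at hex
    refine ⟨1, ?_⟩
    intro g hg
    have hd : IsDiag g := (hG g hg).resolve_right (hex g hg)
    obtain ⟨c, hc⟩ := hdiag g hg hd
    have h1 : (1 : GL2 ℓ) * g * 1⁻¹ = g := by group
    rw [h1]
    constructor
    · show mat g 1 1 = mat g 0 0
      rw [hc]; simp [Matrix.one_apply]
    · show mat g 0 1 = δ * mat g 1 0
      rw [hc]; simp [Matrix.one_apply]
end
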